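/- arXiv:2403.05071 — 4 statements merged into one kernel-verified Lean document; each statement's English description precedes it below -/
import Mathlib

section
/- Let T ∈ B_{A^{1/2}}(H). If λ ∈ σ_{A,app}(T), then λ^n ∈ σ_{A,app}(T^n) for every positive integer n. -/
open Filter Topology ContinuousLinearMap

variable {H : Type*} [NormedAddCommGroup H] [InnerProductSpace ℂ H] [CompleteSpace H]

/-- The `A`-seminorm `‖x‖_A = ⟨Ax,x⟩^{1/2}`. -/
noncomputable def anorm (A : H →L[ℂ] H) (x : H) : ℝ :=
  Real.sqrt (inner ℂ (A x) x : ℂ).re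

/-- `B_{A^{1/2}}(H)`: the `A`-bounded operators. -/
def MemBAhalf (A T : H →L[ℂ] H) : Prop :=
  ∃ d > 0, ∀ ξ : H, anorm A (T ξ) ≤ d * anorm A ξ

/-- `B_A(H)`: operators admitting an `A`-adjoint. -/
def MemBA (A T : H →L[ℂ] H) : Prop :=
  Set.range (fun x => ContinuousLinearMap.adjoint T (A x)) ⊆ Set.range A

/-- A-invertibility in `B_{A^{1/2}}(H)`. -/
def AInvertibleHalf (A T : H →L[ℂ] H) : Prop :=
  ∃ S : H →L[ℂ] H, S ≠ 0 ∧ MemBAhalf A S ∧ A ∘L T ∘L S = A ∧ A ∘L S ∘L T = A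

/-- A-invertibility in `B_A(H)`. -/
def AInvertibleBA (A T : H →L[ℂ] H) : Prop :=
  ∃ S : H →L[ℂ] H, S ≠ 0 ∧ MemBA A S ∧ A ∘L T ∘L S = A ∧ A ∘L S ∘L T = A

/-- The `A`-approximate point spectrum. -/
def sigmaAapp (A T : H →L[ℂ] H) : Set ℂ :=
  {lam | ∃ x : ℕ → H, (∀ n, anorm A (x n) = 1) ∧
    Tendsto (fun n => anorm A (T (x n) - lam • x n)) atTop (nhds 0)}

/-- The `A`-spectrum. -/
def sigmaA (A T : H →L[ℂ] H) : Set ℂ :=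
  {lam | ¬ AInvertibleHalf A (lam • (1 : H →L[ℂ] H) - T)}

/-- The `A`-numerical range. -/
def WA (A T : H →L[ℂ] H) : Set ℂ :=
  {z | ∃ x : H, anorm A x = 1 ∧ z = (inner ℂ (A (T x)) x : ℂ)}

/-- The `A`-operator seminorm, sup over the closure of the range of `A`. -/
noncomputable def AopnormCl (A T : H →L[ℂ] H) : ℝ :=
  sSup {r | ∃ ξ ∈ closure (Set.range A), anorm A ξ ≤ 1 ∧ r = anorm A (T ξ)}

/-- The `A`-operator seminorm, sup over all vectors of `A`-seminorm at most one. -/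
noncomputable def Aopnorm (A T : H →L[ℂ] H) : ℝ :=
  sSup {r | ∃ ξ : H, anorm A ξ ≤ 1 ∧ r = anorm A (T ξ)}

/-- The `A`-numerical radius. -/
noncomputable def wA (A T : H →L[ℂ] H) : ℝ :=
  sSup {r | ∃ x : H, anorm A x = 1 ∧ r = ‖(inner ℂ (A (T x)) x : ℂ)‖}

/-- The `A`-reduced minimum modulus. -/
noncomputable def gammaA (A T : H →L[ℂ] H) : ℝ :=
  sInf {r | ∃ ξ : H, (∀ y : H, anorm A (T y) = 0 → (inner ℂ (A ξ) y : ℂ) = 0) ∧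
    anorm A ξ = 1 ∧ r = anorm A (T ξ)}

/-- closure of the range of `A` as a submodule. -/
noncomputable def rangeClosure (A : H →L[ℂ] H) : Submodule ℂ H :=
  (LinearMap.range (A : H →ₗ[ℂ] H)).topologicalClosure

noncomputable instance (A : H →L[ℂ] H) : CompleteSpace (rangeClosure A) :=
  (Submodule.isClosed_topologicalClosure _).completeSpace_coe

/-- orthogonal projection onto the closure of the range of `A`, as an operator on `H`. -/
noncomputable def Pcl (A : H →L[ℂ] H) : H →L[ℂ] H :=
  (rangeClosure A).subtypeL ∘L (rangeClosure A).orthogonalProjectionOnto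


set_option synthInstance.maxHeartbeats 1000000 in
lemma exists_sqrt_anorm' (A : H →L[ℂ] H) (hA : A.IsPositive) :
    ∃ a : H →L[ℂ] H, ∀ x : H, anorm A x = ‖a x‖ := by
  rw [← ContinuousLinearMap.nonneg_iff_isPositive] at hA
  set a := CFC.sqrt A with ha
  refine ⟨a, fun x => ?_⟩
  have h1 : a * a = A := by rw [← pow_two, ha]; exact CFC.sq_sqrt A hA
  have hsa : IsSelfAdjoint a := (CFC.sqrt_nonneg (a := A)).isSelfAdjoint
  have hadj : ContinuousLinearMap.adjoint a = a :=
    ContinuousLinearMap.isSelfAdjoint_iff'.mp hsa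
  have h2 : A x = a (a x) := by rw [← h1]; rfl
  have key : (inner ℂ (A x) x : ℂ) = inner ℂ (a x) (a x) := by
    rw [h2]
    nth_rewrite 1 [← hadj]
    exact ContinuousLinearMap.adjoint_inner_left a x (a x)
  have : (inner ℂ (A x) x : ℂ).re = ‖a x‖ ^ 2 := by
    rw [key, inner_self_eq_norm_sq_to_K]; norm_cast
  rw [anorm, this, Real.sqrt_sq (norm_nonneg _)]

/-- if `λ ∈ σ_{A,app}(T)` then `λ^n ∈ σ_{A,app}(T^n)` for all `n ≥ 1`. -/
theorem stmt7 (A T : H →L[ℂ] H) (hA : A.IsPositive) (hA0 : A ≠ 0)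
    (hT : MemBAhalf A T) (lam : ℂ) (hlam : lam ∈ sigmaAapp A T) :
    ∀ n : ℕ, 0 < n → lam ^ n ∈ sigmaAapp A (T ^ n) := by
  obtain ⟨a, ha⟩ := exists_sqrt_anorm' A hA
  obtain ⟨d, hd, hTd⟩ := hT
  obtain ⟨x, hx1, hx2⟩ := hlam
  simp only [ha] at hTd hx2
  have key : ∀ n : ℕ, 0 < n → ∃ C : ℝ, ∀ v : H,
      ‖a ((T ^ n) v - lam ^ n • v)‖ ≤ C * ‖a (T v - lam • v)‖ := by
    intro n hn
    induction n with
    | zero => exact absurd hn (lt_irrefl 0)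
    | succ m ih =>
      rcases Nat.eq_zero_or_pos m with hm | hm
      · subst hm
        exact ⟨1, fun v => by simp⟩
      · obtain ⟨C, hC⟩ := ih hm
        refine ⟨d * C + ‖lam‖ ^ m, fun v => ?_⟩
        have hid : (T ^ (m + 1)) v - lam ^ (m + 1) • v
            = T ((T ^ m) v - lam ^ m • v) + lam ^ m • (T v - lam • v) := by
          simp only [pow_succ', ContinuousLinearMap.mul_apply, map_sub, map_smul,
            smul_sub, smul_smul, pow_succ, mul_comm]
          abel
        rw [hid, map_add]
        calc ‖a (T ((T ^ m) v - lam ^ m • v)) + a (lam ^ m • (T v - lam • v))‖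
            ≤ ‖a (T ((T ^ m) v - lam ^ m • v))‖ + ‖a (lam ^ m • (T v - lam • v))‖ :=
              norm_add_le _ _
          _ ≤ d * (C * ‖a (T v - lam • v)‖) + ‖lam‖ ^ m * ‖a (T v - lam • v)‖ := by
              gcongr
              · exact le_trans (hTd _) (by gcongr; exact hC v)
              · rw [map_smul, norm_smul]
                simp [norm_pow]
          _ = (d * C + ‖lam‖ ^ m) * ‖a (T v - lam • v)‖ := by ring
  intro n hn
  obtain ⟨C, hC⟩ := key n hn
  refine ⟨x, hx1, ?_⟩
  simp only [ha]
  have h0 : Tendsto (fun k => C * ‖a (T (x k) - lam • x k)‖) atTop (nhds 0) := by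
    simpa using hx2.const_mul C
  exact squeeze_zero (fun k => norm_nonneg _) (fun k => hC (x k)) h0
end

section
/- Let T ∈ B_{A^{1/2}}(H). Then σ_{A,app}(T) = σ_{A,app}((T^◇)^◇). -/
open Filter Topology ContinuousLinearMap

variable {H : Type*} [NormedAddCommGroup H] [InnerProductSpace ℂ H] [CompleteSpace H]

lemma anorm_eq_norm_sqrt {H : Type*} [NormedAddCommGroup H] [InnerProductSpace ℂ H]
    [CompleteSpace H] (A sqrtA : H →L[ℂ] H) (hsqpos : sqrtA.IsPositive)
    (hsq : sqrtA ∘L sqrtA = A) (x : H) : anorm A x = ‖sqrtA x‖ := by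
  have hsa : ContinuousLinearMap.adjoint sqrtA = sqrtA := hsqpos.isSelfAdjoint.adjoint_eq
  have h1 : A x = sqrtA (sqrtA x) := by rw [← hsq]; rfl
  have h2 : (inner ℂ (A x) x : ℂ) = inner ℂ (sqrtA x) (sqrtA x) := by
    rw [h1, ← ContinuousLinearMap.adjoint_inner_left, hsa]
  rw [anorm, h2, inner_self_eq_norm_sq_to_K]
  norm_cast
  exact Real.sqrt_sq (norm_nonneg _)

/-- `σ_{A,app}(T) = σ_{A,app}((T^◇)^◇)`. -/
theorem stmt11 (A T sqrtA Tdia Tdd : H →L[ℂ] H) (hA : A.IsPositive) (hA0 : A ≠ 0)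
    (hsqpos : sqrtA.IsPositive) (hsq : sqrtA ∘L sqrtA = A)
    (hT : MemBAhalf A T)
    (hdia : sqrtA ∘L Tdia = (ContinuousLinearMap.adjoint T) ∘L sqrtA)
    (hrange : Set.range Tdia ⊆ closure (Set.range sqrtA))
    (hdd : sqrtA ∘L Tdd = (ContinuousLinearMap.adjoint Tdia) ∘L sqrtA)
    (hrange' : Set.range Tdd ⊆ closure (Set.range sqrtA)) :
    sigmaAapp A T = sigmaAapp A Tdd := by
  have hsa : ContinuousLinearMap.adjoint sqrtA = sqrtA := hsqpos.isSelfAdjoint.adjoint_eq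
  have key : sqrtA ∘L Tdd = sqrtA ∘L T := by
    have h := congrArg ContinuousLinearMap.adjoint hdia
    rw [ContinuousLinearMap.adjoint_comp, ContinuousLinearMap.adjoint_comp,
      ContinuousLinearMap.adjoint_adjoint, hsa] at h
    rw [hdd, h]
  have keyx : ∀ x : H, sqrtA (Tdd x) = sqrtA (T x) := fun x =>
    congrFun (congrArg (fun (f : H →L[ℂ] H) => (f : H → H)) key) x
  have hnorm : ∀ (lam : ℂ) (v : H),
      anorm A (T v - lam • v) = anorm A (Tdd v - lam • v) := by
    intro lam v
    rw [anorm_eq_norm_sqrt A sqrtA hsqpos hsq, anorm_eq_norm_sqrt A sqrtA hsqpos hsq,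
      map_sub, map_sub, keyx]
  ext lam
  constructor
  · rintro ⟨x, hx1, hx2⟩
    exact ⟨x, hx1, by simpa only [hnorm lam] using hx2⟩
  · rintro ⟨x, hx1, hx2⟩
    exact ⟨x, hx1, by simpa only [← hnorm lam] using hx2⟩
end

section
/- Let T ∈ B_A(H) and define T_a : cl(R(A)) → cl(R(A)) by T_a = (A^{1/2})^† T* A^{1/2} restricted to cl(R(A)). Then T is A-normal (meaning ‖Tx‖_A = ‖T^♯ x‖_A for all x ∈ H) if and only if T_a is a normal operator on the Hilbert space cl(R(A)). -/
open Filter Topology ContinuousLinearMap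

variable {H : Type*} [NormedAddCommGroup H] [InnerProductSpace ℂ H] [CompleteSpace H]

set_option maxHeartbeats 1600000 in
/-- `T ∈ B_A(H)` is `A`-normal iff `T_a` is a normal operator on `cl(R(A))`,
where `T_a` is determined by `A^{1/2} (T_a z) = T^* (A^{1/2} z)` for `z ∈ cl(R(A))`. -/
theorem stmt18 (A T sqrtA Ts : H →L[ℂ] H) (hA : A.IsPositive) (hA0 : A ≠ 0)
    (hT : MemBA A T)
    (hsqpos : sqrtA.IsPositive) (hsq : sqrtA ∘L sqrtA = A)
    (hTs : (ContinuousLinearMap.adjoint T) ∘L A = A ∘L Ts)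
    (hTsr : Set.range Ts ⊆ closure (Set.range A))
    (Ta : rangeClosure A →L[ℂ] rangeClosure A)
    (hTa : ∀ z : rangeClosure A,
      sqrtA ((Ta z : H)) = (ContinuousLinearMap.adjoint T) (sqrtA (z : H))) :
    (∀ x : H, anorm A (T x) = anorm A (Ts x)) ↔
      Ta ∘L (ContinuousLinearMap.adjoint Ta) = (ContinuousLinearMap.adjoint Ta) ∘L Ta := by
  have hadjS : ContinuousLinearMap.adjoint sqrtA = sqrtA := hsqpos.isSelfAdjoint.adjoint_eq
  have hadjA : ContinuousLinearMap.adjoint A = A := hA.isSelfAdjoint.adjoint_eq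
  have hAapp : ∀ y : H, sqrtA (sqrtA y) = A y := by
    intro y; rw [← hsq]; rfl
  have hinnS : ∀ u v : H, (inner ℂ (sqrtA u) v : ℂ) = inner ℂ u (sqrtA v) := by
    intro u v
    conv_lhs => rw [← hadjS]
    exact ContinuousLinearMap.adjoint_inner_left _ _ _
  have hinnA : ∀ u v : H, (inner ℂ (A u) v : ℂ) = inner ℂ u (A v) := by
    intro u v
    conv_lhs => rw [← hadjA]
    exact ContinuousLinearMap.adjoint_inner_left _ _ _
  have hnorm : ∀ x : H, anorm A x = ‖sqrtA x‖ := by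
    intro x
    have h1 : (inner ℂ (A x) x : ℂ) = inner ℂ (sqrtA x) (sqrtA x) := by
      rw [← hAapp x, hinnS]
    have h2 : (inner ℂ (A x) x : ℂ).re = ‖sqrtA x‖ ^ 2 := by
      rw [h1, ← RCLike.re_to_complex, inner_self_eq_norm_sq]
    rw [anorm, h2]
    exact Real.sqrt_sq (norm_nonneg _)
  have hker : ∀ u : H, A u = 0 → sqrtA u = 0 := by
    intro u hu
    have h1 := hnorm u
    rw [anorm, hu] at h1
    simp only [ContinuousLinearMap.zero_apply, inner_zero_left, Complex.zero_re,
      Real.sqrt_zero] at h1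
    exact norm_eq_zero.mp h1.symm
  have hmemN : ∀ v : H, (∀ u : H, A u = 0 → (inner ℂ u v : ℂ) = 0) → v ∈ rangeClosure A := by
    intro v hv
    rw [rangeClosure, ← Submodule.orthogonal_orthogonal_eq_closure, Submodule.mem_orthogonal]
    intro u hu
    have hAu : A u = 0 := by
      have h1 := (Submodule.mem_orthogonal _ u).mp hu (A (A u))
        (LinearMap.mem_range.mpr ⟨A u, rfl⟩)
      rw [hinnA (A u) u] at h1
      exact inner_self_eq_zero.mp h1
    exact hv u hAu
  have hSr : ∀ y : H, sqrtA y ∈ rangeClosure A := by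
    intro y
    apply hmemN
    intro u hu
    rw [← hinnS u y, hker u hu, inner_zero_left]
  set σ : H → rangeClosure A := fun y => ⟨sqrtA y, hSr y⟩ with hσ
  have hinj : ∀ u v : rangeClosure A, sqrtA (u : H) = sqrtA (v : H) → u = v := by
    intro u v huv
    have hw : A ((u : H) - v) = 0 := by
      rw [map_sub, ← hAapp (u : H), ← hAapp (v : H), huv, sub_self]
    have hperp : ((u : H) - v) ∈ (LinearMap.range (A : H →ₗ[ℂ] H))ᗮ := by
      rw [Submodule.mem_orthogonal]
      intro w hw'
      obtain ⟨y, rfl⟩ := LinearMap.mem_range.mp hw'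
      show (inner ℂ (A y) ((u : H) - v) : ℂ) = 0
      rw [hinnA, hw, inner_zero_right]
    have hmem : ((u : H) - v) ∈ (LinearMap.range (A : H →ₗ[ℂ] H))ᗮᗮ := by
      rw [Submodule.orthogonal_orthogonal_eq_closure]
      exact sub_mem u.2 v.2
    have h0 : (inner ℂ ((u : H) - v) ((u : H) - v) : ℂ) = 0 :=
      (Submodule.mem_orthogonal _ _).mp hmem _ hperp
    exact Subtype.ext (sub_eq_zero.mp (inner_self_eq_zero.mp h0))
  have hdense : DenseRange σ := by
    intro z
    have h2 : (z : H) ∈ closure ((LinearMap.range (A : H →ₗ[ℂ] H)) : Set H) := by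
      rw [← Submodule.topologicalClosure_coe]; exact z.2
    have h1 : (z : H) ∈ closure (Set.range fun y => sqrtA y) := by
      refine closure_mono ?_ h2
      intro w hw
      obtain ⟨y, rfl⟩ := LinearMap.mem_range.mp hw
      exact ⟨sqrtA y, hAapp y⟩
    obtain ⟨yn, hyn, hylim⟩ := mem_closure_iff_seq_limit.mp h1
    choose x hx using hyn
    have hten : Tendsto (fun n => σ (x n)) atTop (nhds z) := by
      rw [tendsto_subtype_rng]
      simpa [hσ, hx] using hylim
    exact mem_closure_of_tendsto hten (Filter.Eventually.of_forall fun n => ⟨x n, rfl⟩)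
  have hTaS : ∀ y : H, Ta (σ y) = σ (Ts y) := by
    intro y
    apply hinj
    rw [hTa]
    show ContinuousLinearMap.adjoint T (sqrtA (sqrtA y)) = sqrtA (sqrtA (Ts y))
    rw [hAapp, hAapp]
    have := DFunLike.congr_fun hTs y
    simpa using this
  have hTadS : ∀ x : H, ContinuousLinearMap.adjoint Ta (σ x) = σ (T x) := by
    intro x
    have hfun : (fun w : rangeClosure A =>
        (inner ℂ (ContinuousLinearMap.adjoint Ta (σ x)) w : ℂ)) =
        fun w => (inner ℂ (σ (T x)) w : ℂ) := by
      apply hdense.equalizer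
      · exact continuous_const.inner continuous_id
      · exact continuous_const.inner continuous_id
      funext y
      show (inner ℂ (ContinuousLinearMap.adjoint Ta (σ x)) (σ y) : ℂ) = inner ℂ (σ (T x)) (σ y)
      rw [ContinuousLinearMap.adjoint_inner_left, hTaS y, Submodule.coe_inner,
        Submodule.coe_inner]
      show (inner ℂ (sqrtA x) (sqrtA (Ts y)) : ℂ) = inner ℂ (sqrtA (T x)) (sqrtA y)
      rw [hinnS x, hAapp, hinnS (T x), hAapp]
      have hTsy : A (Ts y) = ContinuousLinearMap.adjoint T (A y) := by
        have := DFunLike.congr_fun hTs y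
        simpa using this.symm
      rw [hTsy, ContinuousLinearMap.adjoint_inner_right]
    exact ext_inner_right ℂ (congrFun hfun)
  have hq1 : ∀ z : rangeClosure A,
      (inner ℂ ((ContinuousLinearMap.adjoint Ta ∘L Ta) z) z : ℂ) = inner ℂ (Ta z) (Ta z) := by
    intro z
    rw [ContinuousLinearMap.comp_apply, ContinuousLinearMap.adjoint_inner_left]
  have hq2 : ∀ z : rangeClosure A,
      (inner ℂ ((Ta ∘L ContinuousLinearMap.adjoint Ta) z) z : ℂ) =
        inner ℂ (ContinuousLinearMap.adjoint Ta z) (ContinuousLinearMap.adjoint Ta z) := by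
    intro z
    rw [ContinuousLinearMap.comp_apply, ← ContinuousLinearMap.adjoint_inner_right]
  constructor
  · intro h
    have key : ∀ z : rangeClosure A, ‖ContinuousLinearMap.adjoint Ta z‖ = ‖Ta z‖ := by
      have hfun : (fun z : rangeClosure A => ‖ContinuousLinearMap.adjoint Ta z‖) =
          fun z => ‖Ta z‖ := by
        apply hdense.equalizer ((ContinuousLinearMap.adjoint Ta).continuous.norm)
          (Ta.continuous.norm)
        funext y
        show ‖ContinuousLinearMap.adjoint Ta (σ y)‖ = ‖Ta (σ y)‖
        rw [hTadS y, hTaS y]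
        show ‖sqrtA (T y)‖ = ‖sqrtA (Ts y)‖
        rw [← hnorm, ← hnorm]
        exact h y
      exact fun z => congrFun hfun z
    have hD : ∀ z : rangeClosure A,
        (inner ℂ (((ContinuousLinearMap.adjoint Ta ∘L Ta) -
          (Ta ∘L ContinuousLinearMap.adjoint Ta)) z) z : ℂ) = 0 := by
      intro z
      rw [ContinuousLinearMap.sub_apply, inner_sub_left, hq1, hq2,
        inner_self_eq_norm_sq_to_K, inner_self_eq_norm_sq_to_K, key, sub_self]
    have h0 : (((ContinuousLinearMap.adjoint Ta ∘L Ta) -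
        (Ta ∘L ContinuousLinearMap.adjoint Ta)) :
          rangeClosure A →ₗ[ℂ] rangeClosure A) = 0 :=
      (inner_map_self_eq_zero _).mp fun z => hD z
    have h0' : ((ContinuousLinearMap.adjoint Ta ∘L Ta) :
        rangeClosure A →ₗ[ℂ] rangeClosure A) = ((Ta ∘L ContinuousLinearMap.adjoint Ta) :
        rangeClosure A →ₗ[ℂ] rangeClosure A) := sub_eq_zero.mp h0
    exact (ContinuousLinearMap.coe_injective h0').symm
  · intro h x
    have key : ∀ z : rangeClosure A, ‖Ta z‖ = ‖ContinuousLinearMap.adjoint Ta z‖ := by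
      intro z
      have hinner : (inner ℂ (Ta z) (Ta z) : ℂ) =
          inner ℂ (ContinuousLinearMap.adjoint Ta z) (ContinuousLinearMap.adjoint Ta z) := by
        rw [← hq1, ← hq2, h]
      rw [inner_self_eq_norm_sq_to_K, inner_self_eq_norm_sq_to_K,
        ← RCLike.ofReal_pow, ← RCLike.ofReal_pow] at hinner
      have h2 : ‖Ta z‖ ^ 2 = ‖ContinuousLinearMap.adjoint Ta z‖ ^ 2 :=
        RCLike.ofReal_inj.mp hinner
      rw [← Real.sqrt_sq (norm_nonneg (Ta z)),
        ← Real.sqrt_sq (norm_nonneg (ContinuousLinearMap.adjoint Ta z)), h2]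
    calc anorm A (T x) = ‖sqrtA (T x)‖ := hnorm _
      _ = ‖ContinuousLinearMap.adjoint Ta (σ x)‖ := by rw [hTadS x]; rfl
      _ = ‖Ta (σ x)‖ := (key _).symm
      _ = ‖sqrtA (Ts x)‖ := by rw [hTaS x]; rfl
      _ = anorm A (Ts x) := (hnorm _).symm
end

section
/- Let T ∈ B_A(H) be A-normal and suppose R(A) is closed. Then σ_A(T) = σ_{A,app}(T). -/
open Filter Topology ContinuousLinearMap

variable {H : Type*} [NormedAddCommGroup H] [InnerProductSpace ℂ H] [CompleteSpace H]

set_option linter.unusedSectionVars false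
section aux
variable {A T Ts : H →L[ℂ] H}

variable {A : H →L[ℂ] H}

lemma hsa (hA : A.IsPositive) (x y : H) : (inner ℂ (A x) y : ℂ) = inner ℂ x (A y) := by
  have h := ContinuousLinearMap.isSelfAdjoint_iff'.mp hA.isSelfAdjoint
  calc (inner ℂ (A x) y : ℂ) = inner ℂ ((ContinuousLinearMap.adjoint A) x) y := by rw [h]
  _ = inner ℂ x (A y) := ContinuousLinearMap.adjoint_inner_left A y x

/-- the semi-inner-product core attached to a positive operator -/
noncomputable def coreA (A : H →L[ℂ] H) (hA : A.IsPositive) : PreInnerProductSpace.Core ℂ H where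
  inner x y := (inner ℂ (A x) y : ℂ)
  conj_inner_symm x y := by
    show (starRingEnd ℂ) (inner ℂ (A y) x) = inner ℂ (A x) y
    rw [hsa hA y x]
    exact inner_conj_symm _ _
  re_inner_nonneg x := hA.2 x
  add_left x y z := by simp [inner_add_left]
  smul_left x y r := by simp [inner_smul_left, mul_comm]

lemma anorm_nonneg (x : H) : 0 ≤ anorm A x := Real.sqrt_nonneg _

lemma anorm_sq (hA : A.IsPositive) (x : H) : (anorm A x) ^ 2 = (inner ℂ (A x) x : ℂ).re := by
  rw [anorm]
  exact Real.sq_sqrt (hA.2 x)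

lemma csA (hA : A.IsPositive) (x y : H) : ‖(inner ℂ (A x) y : ℂ)‖ ≤ anorm A x * anorm A y := by
  have h := @InnerProductSpace.Core.inner_mul_inner_self_le ℂ H _ _ _ (coreA A hA) x y
  have hxy : (@inner ℂ H (coreA A hA).toInner x y) = (inner ℂ (A x) y : ℂ) := rfl
  have hyx : (@inner ℂ H (coreA A hA).toInner y x) = (inner ℂ (A y) x : ℂ) := rfl
  have hsym : ‖(inner ℂ (A y) x : ℂ)‖ = ‖(inner ℂ (A x) y : ℂ)‖ := by
    rw [hsa hA y x]
    exact norm_inner_symm y (A x)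
  rw [hxy, hyx, hsym] at h
  have h2 : ‖(inner ℂ (A x) y : ℂ)‖ ^ 2 ≤ (anorm A x * anorm A y) ^ 2 := by
    rw [mul_pow, anorm_sq hA, anorm_sq hA]
    calc ‖(inner ℂ (A x) y : ℂ)‖ ^ 2 = ‖(inner ℂ (A x) y : ℂ)‖ * ‖(inner ℂ (A x) y : ℂ)‖ := sq ‖_‖
    _ ≤ _ := h
  exact (pow_le_pow_iff_left₀ (norm_nonneg _)
    (mul_nonneg (anorm_nonneg x) (anorm_nonneg y)) (by norm_num)).mp h2

lemma A_eq_zero_of_anorm (hA : A.IsPositive) (x : H) (h : anorm A x = 0) : A x = 0 := by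
  have h1 : ∀ y : H, (inner ℂ (A x) y : ℂ) = 0 := by
    intro y
    have := csA hA x y
    rw [h, zero_mul] at this
    simpa using le_antisymm this (norm_nonneg _)
  exact inner_self_eq_zero.mp (h1 (A x))

lemma anorm_smul (c : ℂ) (x : H) : anorm A (c • x) = ‖c‖ * anorm A x := by
  unfold anorm
  rw [map_smul, inner_smul_left, inner_smul_right, ← mul_assoc, Complex.conj_mul',
    ← Complex.ofReal_pow, Complex.re_ofReal_mul, Real.sqrt_mul (by positivity),
    Real.sqrt_sq (norm_nonneg c)]

lemma anorm_neg (x : H) : anorm A (-x) = anorm A x := by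
  have := anorm_smul (A := A) (-1 : ℂ) x
  simpa using this

lemma anorm_le_norm (x : H) : anorm A x ≤ Real.sqrt ‖A‖ * ‖x‖ := by
  have h1 : (inner ℂ (A x) x : ℂ).re ≤ ‖A‖ * ‖x‖ ^ 2 := by
    calc (inner ℂ (A x) x : ℂ).re ≤ ‖(inner ℂ (A x) x : ℂ)‖ := Complex.re_le_norm _
    _ ≤ ‖A x‖ * ‖x‖ := norm_inner_le_norm _ _
    _ ≤ ‖A‖ * ‖x‖ * ‖x‖ := by gcongr; exact A.le_opNorm x
    _ = ‖A‖ * ‖x‖ ^ 2 := by ring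
  calc anorm A x ≤ Real.sqrt (‖A‖ * ‖x‖ ^ 2) := Real.sqrt_le_sqrt h1
  _ = Real.sqrt ‖A‖ * ‖x‖ := by
      rw [Real.sqrt_mul (norm_nonneg _), Real.sqrt_sq (norm_nonneg _)]

lemma normAx_sq_le (hA : A.IsPositive) (x : H) :
    ‖A x‖ ^ 2 ≤ ‖A‖ * (inner ℂ (A x) x : ℂ).re := by
  have h := csA hA x (A x)
  have h1 : (inner ℂ (A x) (A x) : ℂ) = (‖A x‖ : ℂ) ^ 2 := inner_self_eq_norm_sq_to_K _
  rw [h1] at h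
  have h2 : ‖((‖A x‖ : ℂ)) ^ 2‖ = ‖A x‖ ^ 2 := by
    rw [norm_pow, Complex.norm_real, norm_norm]
  rw [h2] at h
  have h3 : anorm A (A x) ≤ Real.sqrt ‖A‖ * ‖A x‖ := anorm_le_norm (A := A) (A x)
  have h4 : ‖A x‖ ^ 2 ≤ anorm A x * (Real.sqrt ‖A‖ * ‖A x‖) := by
    calc ‖A x‖ ^ 2 ≤ anorm A x * anorm A (A x) := h
    _ ≤ _ := by gcongr; exact anorm_nonneg _
  have h5 : (anorm A x * (Real.sqrt ‖A‖ * ‖A x‖)) ^ 2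
      = (inner ℂ (A x) x : ℂ).re * (‖A‖ * ‖A x‖ ^2) := by
    rw [mul_pow, mul_pow, anorm_sq hA, Real.sq_sqrt (norm_nonneg _)]
  rcases eq_or_ne (‖A x‖) 0 with hz | hz
  · rw [hz]
    norm_num
    exact mul_nonneg (norm_nonneg _) (hA.2 x)
  · have h6 : (‖A x‖ ^ 2) ^ 2 ≤ (inner ℂ (A x) x : ℂ).re * (‖A‖ * ‖A x‖ ^ 2) := by
      calc (‖A x‖ ^ 2) ^ 2 ≤ (anorm A x * (Real.sqrt ‖A‖ * ‖A x‖)) ^ 2 :=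
            pow_le_pow_left₀ (by positivity) h4 2
      _ = _ := h5
    have hpos : 0 < ‖A x‖ ^ 2 := by positivity
    nlinarith [h6]



lemma anorm_add_ker (hA : A.IsPositive) {w n : H} (hn : A n = 0) :
    anorm A (w + n) = anorm A w := by
  unfold anorm
  congr 2
  rw [map_add, hn, add_zero, inner_add_right, hsa hA w n, hn, inner_zero_right, add_zero]

/-- the `A`-adjoint relation -/
lemma relA (hA : A.IsPositive) (hTs : (ContinuousLinearMap.adjoint T) ∘L A = A ∘L Ts)
    (x y : H) : (inner ℂ (A (T x)) y : ℂ) = inner ℂ (A x) (Ts y) := by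
  calc (inner ℂ (A (T x)) y : ℂ) = inner ℂ (T x) (A y) := hsa hA (T x) y
  _ = inner ℂ x ((ContinuousLinearMap.adjoint T) (A y)) := by
      rw [ContinuousLinearMap.adjoint_inner_right]
  _ = inner ℂ x (((ContinuousLinearMap.adjoint T) ∘L A) y) := rfl
  _ = inner ℂ x ((A ∘L Ts) y) := by rw [hTs]
  _ = inner ℂ x (A (Ts y)) := rfl
  _ = inner ℂ (A x) (Ts y) := (hsa hA x (Ts y)).symm

lemma ker_stable (hA : A.IsPositive) (hTs : (ContinuousLinearMap.adjoint T) ∘L A = A ∘L Ts)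
    {n : H} (hn : A n = 0) : A (T n) = 0 := by
  have h : ∀ y : H, (inner ℂ (A (T n)) y : ℂ) = 0 := fun y => by
    rw [relA hA hTs, hn, inner_zero_left]
  exact inner_self_eq_zero.mp (h (A (T n)))

/-- transfer of the lower bound through `A`-normality -/
lemma normal_transfer (hA : A.IsPositive)
    (hTs : (ContinuousLinearMap.adjoint T) ∘L A = A ∘L Ts)
    (hnormal : ∀ x : H, anorm A (T x) = anorm A (Ts x)) (lam : ℂ) (x : H) :
    anorm A (T x - lam • x) = anorm A (Ts x - (starRingEnd ℂ) lam • x) := by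
  unfold anorm
  congr 1
  have e1 : (inner ℂ (A (T x)) (T x) : ℂ).re = (inner ℂ (A (Ts x)) (Ts x) : ℂ).re := by
    have h := hnormal x
    have h1 := anorm_sq hA (T x)
    have h2 := anorm_sq hA (Ts x)
    rw [← h1, ← h2, h]
  set c1 : ℂ := inner ℂ (A (T x)) x with hc1
  have e2 : (inner ℂ (A x) (T x) : ℂ) = (starRingEnd ℂ) c1 := by
    rw [hsa hA x (T x)]
    exact (inner_conj_symm x (A (T x))).symm
  have e3 : (inner ℂ (A x) (Ts x) : ℂ) = c1 := (relA hA hTs x x).symm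
  have e4 : (inner ℂ (A (Ts x)) x : ℂ) = (starRingEnd ℂ) c1 := by
    rw [hsa hA (Ts x) x, ← inner_conj_symm (Ts x) (A x), e3]
  have lhs : (inner ℂ (A (T x - lam • x)) (T x - lam • x) : ℂ)
      = inner ℂ (A (T x)) (T x) - lam * c1 - (starRingEnd ℂ) lam * (starRingEnd ℂ) c1
        + (starRingEnd ℂ) lam * lam * (inner ℂ (A x) x : ℂ) := by
    rw [map_sub, map_smul, inner_sub_left, inner_sub_right, inner_sub_right,
      inner_smul_left, inner_smul_right, inner_smul_left, inner_smul_right, e2, ← hc1]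
    ring
  have rhs : (inner ℂ (A (Ts x - (starRingEnd ℂ) lam • x)) (Ts x - (starRingEnd ℂ) lam • x) : ℂ)
      = inner ℂ (A (Ts x)) (Ts x) - (starRingEnd ℂ) lam * (starRingEnd ℂ) c1 - lam * c1
        + (starRingEnd ℂ) lam * lam * (inner ℂ (A x) x : ℂ) := by
    rw [map_sub, map_smul, inner_sub_left, inner_sub_right, inner_sub_right,
      inner_smul_left, inner_smul_right, inner_smul_left, inner_smul_right, e3, e4]
    simp only [RingHomCompTriple.comp_apply, RingHom.id_apply, Complex.conj_conj]
    ring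
  rw [lhs, rhs]
  simp only [Complex.sub_re, Complex.add_re]
  rw [e1]
  ring

end aux

set_option maxHeartbeats 1000000

set_option linter.unusedVariables false


lemma dir1 (A T : H →L[ℂ] H) (hA : A.IsPositive) (lam : ℂ)
    (h : lam ∈ sigmaAapp A T) : lam ∈ sigmaA A T := by
  obtain ⟨x, hx1, hx2⟩ := h
  rintro ⟨S, hS0, ⟨d, hd, hbd⟩, h1, h2⟩
  have key : ∀ n, (1:ℝ) ≤ d * anorm A (T (x n) - lam • x n) := by
    intro n
    have happ : A (S (lam • x n - T (x n))) = A (x n) := by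
      have := congrFun (congrArg DFunLike.coe h2) (x n)
      simpa [ContinuousLinearMap.sub_apply, ContinuousLinearMap.smul_apply] using this
    have hre : (inner ℂ (A (x n)) (x n) : ℂ).re = 1 := by
      have hs := anorm_sq hA (x n)
      rw [hx1 n] at hs
      simpa using hs.symm
    have hchain : (1:ℝ) ≤ ‖(inner ℂ (A (x n)) (x n) : ℂ)‖ := by
      rw [← hre]; exact Complex.re_le_norm _
    calc (1:ℝ) ≤ ‖(inner ℂ (A (x n)) (x n) : ℂ)‖ := hchain
    _ = ‖(inner ℂ (A (S (lam • x n - T (x n)))) (x n) : ℂ)‖ := by rw [happ]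
    _ ≤ anorm A (S (lam • x n - T (x n))) * anorm A (x n) := csA hA _ _
    _ = anorm A (S (lam • x n - T (x n))) := by rw [hx1 n, mul_one]
    _ ≤ d * anorm A (lam • x n - T (x n)) := hbd _
    _ = d * anorm A (T (x n) - lam • x n) := by
        rw [show lam • x n - T (x n) = -(T (x n) - lam • x n) by abel, anorm_neg]
  have hlim : Tendsto (fun n => d * anorm A (T (x n) - lam • x n)) atTop (nhds 0) := by
    simpa using hx2.const_mul d
  obtain ⟨n, hn⟩ := (hlim.eventually (gt_mem_nhds one_pos)).exists
  exact absurd (key n) (not_le.mpr hn)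


lemma dir2 (A T Ts : H →L[ℂ] H) (hA : A.IsPositive) (hA0 : A ≠ 0)
    (hclosed : IsClosed (Set.range A))
    (hTs : (ContinuousLinearMap.adjoint T) ∘L A = A ∘L Ts)
    (hnormal : ∀ x : H, anorm A (T x) = anorm A (Ts x))
    (lam : ℂ) (c : ℝ) (hc : 0 < c)
    (hlow : ∀ x : H, c * anorm A x ≤ anorm A (T x - lam • x)) :
    AInvertibleHalf A (lam • (1 : H →L[ℂ] H) - T) := by
  classical
  set M := rangeClosure A with hM
  -- the closure of the range is the range
  have hMset : (M : Set H) = Set.range A := by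
    rw [hM, rangeClosure, Submodule.topologicalClosure_coe]
    have : (LinearMap.range (A : H →ₗ[ℂ] H) : Set H) = Set.range A := by
      ext v; simp [LinearMap.mem_range]
    rw [this, hclosed.closure_eq]
  have hmem : ∀ v : H, v ∈ M ↔ ∃ y, A y = v := by
    intro v
    rw [← SetLike.mem_coe, hMset]
    exact Iff.rfl
  have hAmemM : ∀ x : H, A x ∈ M := fun x => (hmem (A x)).mpr ⟨x, rfl⟩
  -- kernel facts
  have hAorth : ∀ n : H, A n = 0 → n ∈ Mᗮ := by
    intro n hn
    rw [Submodule.mem_orthogonal]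
    intro u hu
    obtain ⟨y, hy⟩ := (hmem u).mp hu
    rw [← hy, hsa hA y n, hn, inner_zero_right]
  have horthA : ∀ n : H, n ∈ Mᗮ → A n = 0 := by
    intro n hn
    apply A_eq_zero_of_anorm hA
    have h0 : (inner ℂ (A n) n : ℂ) = 0 := (Submodule.mem_orthogonal _ _).mp hn (A n) (hAmemM n)
    rw [anorm, h0]
    simp
  set P := M.orthogonalProjectionOnto with hP
  have hAsub : ∀ x : H, A (x - (P x : H)) = 0 := fun x =>
    horthA _ (M.sub_starProjection_mem_orthogonal x)
  have hAP : ∀ x : H, A ((P x : H)) = A x := by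
    intro x
    have := hAsub x
    rw [map_sub, sub_eq_zero] at this
    exact this.symm
  have hPker : ∀ n : H, A n = 0 → P n = 0 := fun n hn =>
    Submodule.orthogonalProjectionOnto_apply_of_mem_orthogonal (hAorth n hn)
  have hPanorm : ∀ x : H, anorm A ((P x : H)) = anorm A x := by
    intro x
    have h := anorm_add_ker hA (w := (P x : H)) (n := x - (P x : H)) (hAsub x)
    rw [show (P x : H) + (x - (P x : H)) = x by abel] at h
    exact h.symm
  -- the operator Ahat : M → M induced by A, an isomorphism
  set Ahat : M →L[ℂ] M := P ∘L A ∘L M.subtypeL with hAhatdef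
  have hAhat : ∀ u : M, ((Ahat u : H)) = A (u : H) := by
    intro u
    exact Submodule.starProjection_eq_self_iff.mpr (hAmemM (u : H))
  have hMzero : ∀ u : M, A (u : H) = 0 → u = 0 := by
    intro u hu
    have h1 : (u : H) ∈ Mᗮ := hAorth _ hu
    have h2 : (inner ℂ (u : H) (u : H) : ℂ) = 0 :=
      (Submodule.mem_orthogonal _ _).mp h1 (u : H) u.2
    have := inner_self_eq_zero.mp h2
    exact Subtype.ext this
  have hAker : LinearMap.ker (Ahat : M →ₗ[ℂ] M) = ⊥ := by
    rw [LinearMap.ker_eq_bot, ContinuousLinearMap.coe_coe]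
    intro u v huv
    have h1 : A (u : H) = A (v : H) := by
      rw [← hAhat u, ← hAhat v, huv]
    have h2 : A ((u : H) - (v : H)) = 0 := by rw [map_sub, h1, sub_self]
    have := hMzero (u - v) (by rw [Submodule.coe_sub]; exact h2)
    exact sub_eq_zero.mp this
  have hArange : LinearMap.range (Ahat : M →ₗ[ℂ] M) = ⊤ := by
    rw [LinearMap.range_eq_top]
    intro v
    obtain ⟨y, hy⟩ := (hmem (v : H)).mp v.2
    refine ⟨P y, ?_⟩
    apply Subtype.ext
    rw [ContinuousLinearMap.coe_coe, hAhat (P y), hAP y, hy]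
  let eA : M ≃L[ℂ] M := ContinuousLinearEquiv.ofBijective Ahat hAker hArange
  have heA : ∀ u : M, eA u = Ahat u := fun u =>
    congrFun (ContinuousLinearEquiv.coeFn_ofBijective Ahat hAker hArange) u
  -- lower bound for the ambient norm on M in terms of the A-seminorm
  set Ks : ℝ := ‖(eA.symm : M →L[ℂ] M)‖ with hKs
  have hKsnn : 0 ≤ Ks := by rw [hKs]; exact norm_nonneg ((eA.symm : ↥(rangeClosure A) →L[ℂ] ↥(rangeClosure A)))
  set CK : ℝ := Ks * Real.sqrt ‖A‖ with hCK
  have hCKnn : 0 ≤ CK := by rw [hCK]; exact mul_nonneg hKsnn (Real.sqrt_nonneg _)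
  have hMnorm : ∀ u : M, ‖(u : H)‖ ≤ CK * anorm A (u : H) := by
    intro u
    have h1 : ‖u‖ ≤ Ks * ‖Ahat u‖ := by
      calc ‖u‖ = ‖eA.symm (eA u)‖ := by rw [eA.symm_apply_apply]
      _ ≤ Ks * ‖eA u‖ := (eA.symm : M →L[ℂ] M).le_opNorm _
      _ = Ks * ‖Ahat u‖ := by rw [heA]
    have hcoe : ‖Ahat u‖ = ‖A (u : H)‖ := by
      rw [← hAhat u]; rfl
    have h2 : ‖A (u : H)‖ ^ 2 ≤ ‖A‖ * (anorm A (u : H)) ^ 2 := by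
      rw [anorm_sq hA]; exact normAx_sq_le hA _
    have h3 : ‖A (u : H)‖ ≤ Real.sqrt ‖A‖ * anorm A (u : H) := by
      have := Real.sqrt_le_sqrt h2
      rw [Real.sqrt_sq (norm_nonneg _), Real.sqrt_mul (norm_nonneg _),
        Real.sqrt_sq (anorm_nonneg _)] at this
      exact this
    have hcoe2 : ‖(u : H)‖ = ‖u‖ := rfl
    rw [hcoe2]
    calc ‖u‖ ≤ Ks * ‖A (u : H)‖ := by rw [← hcoe]; exact h1
    _ ≤ Ks * (Real.sqrt ‖A‖ * anorm A (u : H)) := by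
        exact mul_le_mul_of_nonneg_left h3 hKsnn
    _ = CK * anorm A (u : H) := by rw [hCK]; ring
  -- the compression of T to M and the operator L = lam - Ttil
  set Ttil : M →L[ℂ] M := P ∘L T ∘L M.subtypeL with hTtil
  set L : M →L[ℂ] M := lam • (1 : M →L[ℂ] M) - Ttil with hL
  have hLcoe : ∀ u : M, ((L u : H)) = lam • (u : H) - ((P (T (u : H)) : H)) := by
    intro u
    rw [hL]
    simp [hTtil]
  have hALu : ∀ u : M, A ((L u : H)) = A (lam • (u : H) - T (u : H)) := by
    intro u
    rw [hLcoe u, map_sub, map_sub, map_smul, hAP]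
  have hLanorm : ∀ u : M, anorm A ((L u : H)) = anorm A (T (u : H) - lam • (u : H)) := by
    intro u
    have h1 : ((L u : H)) = (lam • (u : H) - T (u : H)) + (T (u : H) - (P (T (u : H)) : H)) := by
      rw [hLcoe u]; abel
    rw [h1, anorm_add_ker hA (hAsub (T (u : H))),
      show lam • (u:H) - T (u:H) = -(T (u:H) - lam • (u:H)) by abel, anorm_neg]
  have hLlow : ∀ u : M, c * anorm A (u : H) ≤ anorm A ((L u : H)) := by
    intro u
    rw [hLanorm u]
    exact hlow (u : H)
  -- L is bounded below in the ambient norm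
  set KL : ℝ := CK * Real.sqrt ‖A‖ / c with hKL
  have hKLnn : 0 ≤ KL := by positivity
  have hLnorm : ∀ u : M, ‖u‖ ≤ KL * ‖L u‖ := by
    intro u
    have h1 : anorm A ((L u : H)) ≤ Real.sqrt ‖A‖ * ‖(L u : H)‖ := anorm_le_norm _
    have h2 : c * anorm A (u : H) ≤ Real.sqrt ‖A‖ * ‖L u‖ := by
      calc c * anorm A (u : H) ≤ anorm A ((L u : H)) := hLlow u
      _ ≤ Real.sqrt ‖A‖ * ‖(L u : H)‖ := h1
      _ = Real.sqrt ‖A‖ * ‖L u‖ := rfl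
    have h3 : ‖(u : H)‖ ≤ CK * anorm A (u : H) := hMnorm u
    have h4 : anorm A (u : H) ≤ Real.sqrt ‖A‖ * ‖L u‖ / c := by
      rw [le_div_iff₀ hc]; linarith [h2]
    calc ‖u‖ = ‖(u : H)‖ := rfl
    _ ≤ CK * anorm A (u : H) := h3
    _ ≤ CK * (Real.sqrt ‖A‖ * ‖L u‖ / c) := mul_le_mul_of_nonneg_left h4 hCKnn
    _ = KL * ‖L u‖ := by rw [hKL]; ring
  have hLker : LinearMap.ker (L : M →ₗ[ℂ] M) = ⊥ := by
    rw [LinearMap.ker_eq_bot, ContinuousLinearMap.coe_coe]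
    intro u v huv
    have h1 : ‖u - v‖ ≤ KL * ‖L (u - v)‖ := hLnorm (u - v)
    rw [map_sub, huv, sub_self, norm_zero, mul_zero] at h1
    have := norm_le_zero_iff.mp h1
    exact sub_eq_zero.mp this
  -- range of L is closed
  have hanti : AntilipschitzWith (Real.toNNReal KL) L :=
    L.antilipschitz_of_bound (fun u => by
      rw [Real.coe_toNNReal KL hKLnn]; exact hLnorm u)
  have hclosedrange : IsClosed ((LinearMap.range (L : M →ₗ[ℂ] M) : Submodule ℂ M) : Set M) := by
    have h := hanti.isClosed_range L.uniformContinuous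
    have : ((LinearMap.range (L : M →ₗ[ℂ] M) : Submodule ℂ M) : Set M) = Set.range L := by
      ext v; simp [LinearMap.mem_range]
    rw [this]
    exact h
  haveI : CompleteSpace (LinearMap.range (L : M →ₗ[ℂ] M) : Submodule ℂ M) := hclosedrange.completeSpace_coe
  -- range of L is everything
  have hLrange : LinearMap.range (L : M →ₗ[ℂ] M) = ⊤ := by
    rw [← Submodule.orthogonal_eq_bot_iff]
    rw [Submodule.eq_bot_iff]
    intro z hz
    set v : M := eA.symm z with hv
    have hAv : A (v : H) = (z : H) := by
      have h1 : eA v = z := eA.apply_symm_apply z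
      rw [← hAhat v]
      rw [show Ahat v = z from h1]
    set w : H := (starRingEnd ℂ) lam • (v : H) - Ts (v : H) with hw
    have horth : ∀ u : M, (inner ℂ (A (u : H)) w : ℂ) = 0 := by
      intro u
      have h1 : (inner ℂ ((L u : M)) z : ℂ) = 0 :=
        (Submodule.mem_orthogonal _ _).mp hz (L u) (LinearMap.mem_range_self _ u)
      rw [Submodule.coe_inner, ← hAv, ← hsa hA ((L u : M) : H) (v : H)] at h1
      -- h1 : ⟪A (L u), v⟫ = 0
      rw [hALu u] at h1
      -- expand
      have h2 : (inner ℂ (A (lam • (u:H) - T (u:H))) (v : H) : ℂ)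
          = (inner ℂ (A (u : H)) w : ℂ) := by
        rw [hw, map_sub, map_smul, inner_sub_left, inner_sub_right, inner_smul_left,
          inner_smul_right, relA hA hTs u (v : H)]
      rw [h2] at h1
      exact h1
    have hPw : (inner ℂ (A w) w : ℂ) = 0 := by
      have := horth (P w)
      rw [show A ((P w : M) : H) = A w from hAP w] at this
      exact this
    have hwanorm : anorm A w = 0 := by
      rw [anorm, hPw]; simp
    have hvanorm : anorm A (T (v:H) - lam • (v:H)) = 0 := by
      rw [normal_transfer hA hTs hnormal lam (v : H)]
      rw [show Ts (v:H) - (starRingEnd ℂ) lam • (v:H) = -w by rw [hw]; abel, anorm_neg]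
      exact hwanorm
    have hv0 : anorm A ((v : H)) = 0 := by
      have h1 := hlow (v : H)
      rw [hvanorm] at h1
      have h2 := anorm_nonneg (A := A) ((v : H))
      nlinarith
    have hvz : v = 0 := by
      have h1 := hMnorm v
      rw [hv0, mul_zero] at h1
      have : (v : H) = 0 := norm_le_zero_iff.mp h1
      exact Subtype.ext this
    have : z = eA v := (eA.apply_symm_apply z).symm
    rw [this, hvz, map_zero]
  -- the inverse
  let eL : M ≃L[ℂ] M := ContinuousLinearEquiv.ofBijective L hLker hLrange
  have heL : ∀ u : M, eL u = L u := fun u =>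
    congrFun (ContinuousLinearEquiv.coeFn_ofBijective L hLker hLrange) u
  set S : H →L[ℂ] H := M.subtypeL ∘L (eL.symm : M →L[ℂ] M) ∘L P with hS
  have hSx : ∀ x : H, S x = ((eL.symm (P x) : M) : H) := fun x => rfl
  have hid1 : A ∘L (lam • (1 : H →L[ℂ] H) - T) ∘L S = A := by
    ext x
    simp only [ContinuousLinearMap.comp_apply]
    set y : M := eL.symm (P x) with hy
    have h2 : (lam • (1 : H →L[ℂ] H) - T) (S x) = lam • ((y:M):H) - T ((y:M):H) := by
      simp only [ContinuousLinearMap.sub_apply, ContinuousLinearMap.smul_apply,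
        ContinuousLinearMap.one_apply, hSx x]
      rfl
    rw [h2, ← hALu y]
    have h3 : L y = P x := by
      rw [← heL y, hy, eL.apply_symm_apply]
    rw [h3]
    exact hAP x
  have hid2 : A ∘L S ∘L (lam • (1 : H →L[ℂ] H) - T) = A := by
    ext x
    simp only [ContinuousLinearMap.comp_apply]
    have hclaim : P (lam • x - T x) = L (P x) := by
      apply Subtype.ext
      rw [hLcoe (P x)]
      have h1 : (P (lam • x - T x) : H) = lam • ((P x : M) : H) - (P (T x) : H) := by
        rw [map_sub, map_smul]
        rfl
      rw [h1]
      have h2 : P (T x) = P (T ((P x : M) : H)) := by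
        have h3 : A (T (x - (P x : H))) = 0 := ker_stable hA hTs (hAsub x)
        have h4 : P (T (x - (P x : H))) = 0 := hPker _ h3
        rw [map_sub] at h4
        exact sub_eq_zero.mp (by rw [← map_sub]; exact h4)
      rw [h2]
    have h5 : (lam • (1 : H →L[ℂ] H) - T) x = lam • x - T x := by simp
    rw [h5]
    have h6 : S (lam • x - T x) = ((eL.symm (L (P x)) : M) : H) := by
      rw [hSx, hclaim]
    rw [h6]
    have h7 : eL.symm (L (P x)) = P x := by
      rw [← heL (P x), eL.symm_apply_apply]
    rw [h7]
    exact hAP x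
  refine ⟨S, ?_, ?_, hid1, hid2⟩
  · -- S ≠ 0
    intro h0
    apply hA0
    rw [h0] at hid1
    rw [← hid1]
    ext x
    simp
  · -- MemBAhalf
    refine ⟨Real.sqrt ‖A‖ * ‖(eL.symm : M →L[ℂ] M)‖ * CK + 1, by positivity, ?_⟩
    intro ξ
    set y : M := eL.symm (P ξ) with hy
    have h1 : anorm A (S ξ) ≤ Real.sqrt ‖A‖ * ‖S ξ‖ := anorm_le_norm _
    have h2 : ‖S ξ‖ = ‖y‖ := by rw [hSx ξ, ← hy]; rfl
    have h3 : ‖y‖ ≤ ‖(eL.symm : M →L[ℂ] M)‖ * ‖P ξ‖ := by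
      rw [hy]; exact (eL.symm : M →L[ℂ] M).le_opNorm _
    have h4 : ‖P ξ‖ ≤ CK * anorm A ξ := by
      have h4a := hMnorm (P ξ)
      rw [hPanorm ξ] at h4a
      exact h4a
    calc anorm A (S ξ) ≤ Real.sqrt ‖A‖ * ‖S ξ‖ := h1
    _ = Real.sqrt ‖A‖ * ‖y‖ := by rw [h2]
    _ ≤ Real.sqrt ‖A‖ * (‖(eL.symm : M →L[ℂ] M)‖ * ‖P ξ‖) :=
        mul_le_mul_of_nonneg_left h3 (Real.sqrt_nonneg _)
    _ ≤ Real.sqrt ‖A‖ * (‖(eL.symm : M →L[ℂ] M)‖ * (CK * anorm A ξ)) := by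
        gcongr
    _ = (Real.sqrt ‖A‖ * ‖(eL.symm : M →L[ℂ] M)‖ * CK) * anorm A ξ := by ring
    _ ≤ (Real.sqrt ‖A‖ * ‖(eL.symm : M →L[ℂ] M)‖ * CK + 1) * anorm A ξ := by
        have := anorm_nonneg (A := A) ξ
        nlinarith

/-- if `T ∈ B_A(H)` is `A`-normal and `R(A)` is closed, then
`σ_A(T) = σ_{A,app}(T)`. -/
theorem stmt19 (A T Ts : H →L[ℂ] H) (hA : A.IsPositive) (hA0 : A ≠ 0)
    (hclosed : IsClosed (Set.range A))
    (hT : MemBA A T)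
    (hTs : (ContinuousLinearMap.adjoint T) ∘L A = A ∘L Ts)
    (hTsr : Set.range Ts ⊆ closure (Set.range A))
    (hnormal : ∀ x : H, anorm A (T x) = anorm A (Ts x)) :
    sigmaA A T = sigmaAapp A T := by
  ext lam
  constructor
  · -- σ_A ⊆ σ_app : contrapositive
    intro hs
    by_contra happ
    apply hs
    -- extract a uniform lower bound
    have hlow : ∃ c > 0, ∀ x : H, c * anorm A x ≤ anorm A (T x - lam • x) := by
      by_contra hcon
      push_neg at hcon
      have hx : ∀ n : ℕ, ∃ x : H, anorm A (T x - lam • x) < (1 / (n + 1 : ℝ)) * anorm A x := by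
        intro n
        obtain ⟨x, hx⟩ := hcon (1 / (n + 1 : ℝ)) (by positivity)
        exact ⟨x, hx⟩
      choose x hxlt using hx
      have hxpos : ∀ n, 0 < anorm A (x n) := by
        intro n
        by_contra hle
        push_neg at hle
        have h0 : anorm A (x n) = 0 := le_antisymm hle (anorm_nonneg _)
        have := hxlt n
        rw [h0, mul_zero] at this
        exact absurd this (not_lt.mpr (anorm_nonneg _))
      set y : ℕ → H := fun n => (((anorm A (x n))⁻¹ : ℝ) : ℂ) • x n with hy
      apply happ
      refine ⟨y, ?_, ?_⟩
      · intro n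
        rw [hy]
        simp only
        rw [anorm_smul]
        rw [Complex.norm_real, Real.norm_eq_abs, abs_inv, abs_of_pos (hxpos n)]
        exact inv_mul_cancel₀ (hxpos n).ne'
      · have hbound : ∀ n, anorm A (T (y n) - lam • y n) ≤ 1 / (n + 1 : ℝ) := by
          intro n
          have hsm : T (y n) - lam • y n
              = (((anorm A (x n))⁻¹ : ℝ) : ℂ) • (T (x n) - lam • x n) := by
            rw [hy]
            simp only [map_smul, smul_sub, smul_comm lam]
          rw [hsm, anorm_smul, Complex.norm_real, Real.norm_eq_abs, abs_inv,
            abs_of_pos (hxpos n)]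
          have h1 := (hxlt n).le
          have h2 : (anorm A (x n))⁻¹ * anorm A (T (x n) - lam • x n)
              ≤ (anorm A (x n))⁻¹ * ((1 / (n + 1 : ℝ)) * anorm A (x n)) := by
            exact mul_le_mul_of_nonneg_left h1 (inv_nonneg.mpr (anorm_nonneg _))
          calc (anorm A (x n))⁻¹ * anorm A (T (x n) - lam • x n)
              ≤ (anorm A (x n))⁻¹ * ((1 / (n + 1 : ℝ)) * anorm A (x n)) := h2
          _ = 1 / (n + 1 : ℝ) := by
                rw [mul_comm ((1:ℝ) / (n + 1 : ℝ)) (anorm A (x n)), ← mul_assoc,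
                  inv_mul_cancel₀ (hxpos n).ne', one_mul]
        have hzero : Tendsto (fun n : ℕ => 1 / (n + 1 : ℝ)) atTop (nhds 0) :=
          tendsto_one_div_add_atTop_nhds_zero_nat
        exact squeeze_zero (fun n => anorm_nonneg _) hbound hzero
    obtain ⟨c, hc, hlow⟩ := hlow
    exact dir2 A T Ts hA hA0 hclosed hTs hnormal lam c hc hlow
  · intro h
    exact dir1 A T hA lam h
end
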